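/- arXiv:2103.05446 — 2 statements merged into one kernel-verified Lean document; each statement's English description precedes it below -/
import Mathlib

section
/- For every σ > 0 and constants K, T ∈ ℝ, the functions r(t) = (σ/(3√6))·(T−t)² and φ(t) = √2·ln(T−t) + K satisfy, for all t < T, the equation r̈(t) = r(t)·(φ̇(t))². -/
open Real

theorem stmt_0 (σ K T : ℝ) (hσ : 0 < σ)
    (r : ℝ → ℝ) (hr : ∀ t, r t = σ / (3 * Real.sqrt 6) * (T - t) ^ 2)
    (φ : ℝ → ℝ) (hφ : ∀ t, φ t = Real.sqrt 2 * Real.log (T - t) + K) :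
    ∀ t < T, deriv (deriv r) t = r t * (deriv φ t) ^ 2 := by
  set c := σ / (3 * Real.sqrt 6) with hc
  have hrf : r = fun t => c * (T - t) ^ 2 := funext hr
  have hsub : ∀ t : ℝ, HasDerivAt (fun s : ℝ => T - s) (-1) t := by
    intro t
    simpa using (hasDerivAt_id t).const_sub T
  have h1 : ∀ t : ℝ, HasDerivAt r (c * (2 * (T - t) * (-1))) t := by
    intro t
    rw [hrf]
    simpa using (((hsub t).pow 2).const_mul c)
  have hdr : deriv r = fun t => c * (2 * (T - t) * (-1)) := by
    funext t; exact (h1 t).deriv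
  intro t ht
  have hT : T - t ≠ 0 := by linarith
  have h2 : HasDerivAt (deriv r) (2 * c) t := by
    rw [hdr]
    have : HasDerivAt (fun s : ℝ => c * (2 * (T - s) * (-1))) (c * (2 * (-1) * (-1))) t := by
      simpa using (((hsub t).const_mul (2 : ℝ)).mul_const (-1)).const_mul c
    simpa [mul_comm] using this
  have hφd : HasDerivAt φ (Real.sqrt 2 * ((T - t)⁻¹ * (-1))) t := by
    have hlog : HasDerivAt (fun s : ℝ => Real.log (T - s)) ((T - t)⁻¹ * (-1)) t :=
      (Real.hasDerivAt_log hT).comp t (hsub t)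
    have := (hlog.const_mul (Real.sqrt 2)).add_const K
    exact funext hφ ▸ this
  rw [h2.deriv, hφd.deriv, hr t]
  have h6 : Real.sqrt 2 ^ 2 = 2 := Real.sq_sqrt (by norm_num)
  field_simp
  nlinarith [h6, sq_nonneg (T - t), sq_nonneg (T - t + 1), (show c * Real.sqrt 2 ^ 2 = c * 2 by rw [h6])]
end

section
/- Suppose (r, φ) solves the system r̈ = r φ̇², r φ̈ + 2ṙφ̇ = −σ r φ̇/√(ṙ² + (rφ̇)²) on an interval, with r > 0 and ṙ² + (rφ̇)² > 0. Then the kinetic energy E(t) = ½(ṙ(t)² + (r(t)φ̇(t))²) is nonincreasing, with Ė(t) = −σ·(r(t)φ̇(t))²/√(ṙ(t)² + (r(t)φ̇(t))²) ≤ 0. -/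
open Real

theorem stmt_12 (σ : ℝ) (hσ : 0 < σ) (I : Set ℝ) (hI : IsOpen I)
    (r φ : ℝ → ℝ)
    (hr2 : ∀ t ∈ I, DifferentiableAt ℝ r t ∧ DifferentiableAt ℝ (deriv r) t)
    (hφ2 : ∀ t ∈ I, DifferentiableAt ℝ φ t ∧ DifferentiableAt ℝ (deriv φ) t)
    (hrpos : ∀ t ∈ I, 0 < r t)
    (hspeed : ∀ t ∈ I, 0 < (deriv r t) ^ 2 + (r t * deriv φ t) ^ 2)
    (heq1 : ∀ t ∈ I, deriv (deriv r) t = r t * (deriv φ t) ^ 2)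
    (heq2 : ∀ t ∈ I, r t * deriv (deriv φ) t + 2 * deriv r t * deriv φ t =
      -σ * (r t * deriv φ t) / Real.sqrt ((deriv r t) ^ 2 + (r t * deriv φ t) ^ 2))
    (E : ℝ → ℝ)
    (hE : ∀ t, E t = (1 / 2) * ((deriv r t) ^ 2 + (r t * deriv φ t) ^ 2)) :
    (∀ t ∈ I, deriv E t =
      -σ * (r t * deriv φ t) ^ 2 /
        Real.sqrt ((deriv r t) ^ 2 + (r t * deriv φ t) ^ 2) ∧ deriv E t ≤ 0) ∧
    ∀ s ∈ I, ∀ t ∈ I, s ≤ t → Set.Icc s t ⊆ I → E t ≤ E s := by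
  have hEfun : E = fun t => (1 / 2 : ℝ) * ((deriv r t) ^ 2 + (r t * deriv φ t) ^ 2) :=
    funext hE
  have key : ∀ t ∈ I, HasDerivAt E
      (-σ * (r t * deriv φ t) ^ 2 /
        Real.sqrt ((deriv r t) ^ 2 + (r t * deriv φ t) ^ 2)) t := by
    intro t ht
    have h1 : HasDerivAt r (deriv r t) t := (hr2 t ht).1.hasDerivAt
    have h2 : HasDerivAt (deriv r) (deriv (deriv r) t) t := (hr2 t ht).2.hasDerivAt
    have h4 : HasDerivAt (deriv φ) (deriv (deriv φ) t) t := (hφ2 t ht).2.hasDerivAt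
    have hg' : HasDerivAt (fun t => r t * deriv φ t)
        (deriv r t * deriv φ t + r t * deriv (deriv φ) t) t := h1.mul h4
    have hE' : HasDerivAt E
        ((1 / 2 : ℝ) * ((2 * deriv r t ^ 1 * deriv (deriv r) t) +
          (2 * (r t * deriv φ t) ^ 1 *
            (deriv r t * deriv φ t + r t * deriv (deriv φ) t)))) t := by
      rw [hEfun]
      exact ((h2.pow 2).add (hg'.pow 2)).const_mul (1 / 2 : ℝ)
    have hS : 0 < Real.sqrt ((deriv r t) ^ 2 + (r t * deriv φ t) ^ 2) :=
      Real.sqrt_pos.mpr (hspeed t ht)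
    convert hE' using 1
    have hq : r t * deriv (deriv φ) t =
        -σ * (r t * deriv φ t) / Real.sqrt ((deriv r t) ^ 2 + (r t * deriv φ t) ^ 2)
          - 2 * deriv r t * deriv φ t := by linarith [heq2 t ht]
    rw [heq1 t ht]
    linear_combination (-(r t * deriv φ t)) * hq
  have nonpos : ∀ t ∈ I,
      -σ * (r t * deriv φ t) ^ 2 /
        Real.sqrt ((deriv r t) ^ 2 + (r t * deriv φ t) ^ 2) ≤ 0 := by
    intro t ht
    apply div_nonpos_of_nonpos_of_nonneg _ (Real.sqrt_nonneg _)
    nlinarith [sq_nonneg (r t * deriv φ t)]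
  constructor
  · intro t ht
    have hd := (key t ht).deriv
    exact ⟨hd, hd ▸ nonpos t ht⟩
  · intro s hs t ht hst hsub
    have hanti : AntitoneOn E (Set.Icc s t) := by
      apply antitoneOn_of_deriv_nonpos (convex_Icc s t)
      · intro x hx
        exact ((key x (hsub hx)).differentiableAt.continuousAt).continuousWithinAt
      · intro x hx
        rw [interior_Icc] at hx
        exact ((key x (hsub (Set.Ioo_subset_Icc_self hx))).differentiableAt).differentiableWithinAt
      · intro x hx
        rw [interior_Icc] at hx
        have hxI := hsub (Set.Ioo_subset_Icc_self hx)
        rw [(key x hxI).deriv]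
        exact nonpos x hxI
    exact hanti (Set.left_mem_Icc.mpr hst) (Set.right_mem_Icc.mpr hst) hst
end
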